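/- Under hypotheses (H2)–(H3) on the correlation functions, each of the four functions (y,z) ↦ g₂(0,y), (y,z) ↦ g₂(0,z), (y,z) ↦ g₂(y,z), and (y,z) ↦ g₃(0,y,z)/g₂(0,y) (with the convention that the quotient is 0 where g₂(0,y) = 0) belongs to the class 𝒢. -/

import Mathlib

noncomputable section
open MeasureTheory Metric Real Filter
open scoped ENNReal NNReal

/-- Three-dimensional Euclidean space. -/
abbrev E3 : Type := EuclideanSpace ℝ (Fin 3)

/-- `F ∈ L^q(ℝ³) ∩ L^∞(ℝ³)`. -/
def MemLqLinf (q : ℝ) (F : E3 → ℝ) : Prop :=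
  MemLp F (ENNReal.ofReal q) volume ∧ MemLp F ⊤ volume

/-- A function of the form `constant + (function in L^q ∩ L^∞)`. -/
def ConstPlusLqLinf (q : ℝ) (f : E3 → ℝ) : Prop :=
  ∃ (c : ℝ) (h : E3 → ℝ), MemLqLinf q h ∧ f = fun x => c + h x

/-- The class `𝒢` of two-point functions: finite sums of tensorized terms
`G₁(y)G₂(z)G₃(y−z)` plus an `L^q ∩ L^∞` remainder. -/
def ClassG (G : E3 → E3 → ℝ) : Prop :=
  ∃ (K : ℕ) (q : ℝ), 1 ≤ q ∧
    ∃ G₁ G₂ G₃ : Fin K → E3 → ℝ,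
      (∀ k, ConstPlusLqLinf q (G₁ k) ∧ ConstPlusLqLinf q (G₂ k) ∧ ConstPlusLqLinf q (G₃ k)) ∧
      ∃ R : E3 × E3 → ℝ,
        MemLp R (ENNReal.ofReal q) (volume : Measure (E3 × E3)) ∧
        MemLp R ⊤ (volume : Measure (E3 × E3)) ∧
        ∀ y z : E3, G y z = (∑ k, G₁ k y * G₂ k z * G₃ k (y - z)) + R (y, z)

/-- Interpolation: `L^q ∩ L^∞ ⊆ L^r` for `q ≤ r < ∞`. -/
lemma memLp_interp {α : Type*} [MeasurableSpace α] {μ : Measure α} {G : α → ℝ} {q r : ℝ}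
    (hq : 0 < q) (hqr : q ≤ r) (h1 : MemLp G (ENNReal.ofReal q) μ) (h2 : MemLp G ⊤ μ) :
    MemLp G (ENNReal.ofReal r) μ := by
  have hr : 0 < r := lt_of_lt_of_le hq hqr
  have hq0 : ENNReal.ofReal q ≠ 0 := by simp [ENNReal.ofReal_eq_zero, not_le, hq]
  have hr0 : ENNReal.ofReal r ≠ 0 := by simp [ENNReal.ofReal_eq_zero, not_le, hr]
  refine ⟨h1.1, ?_⟩
  rw [eLpNorm_lt_top_iff_lintegral_rpow_enorm_lt_top hr0 ENNReal.ofReal_ne_top,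
    ENNReal.toReal_ofReal hr.le]
  have hint : (∫⁻ a, (‖G a‖₊ : ℝ≥0∞) ^ q ∂μ) < ⊤ := by
    have := lintegral_rpow_enorm_lt_top_of_eLpNorm_lt_top hq0 ENNReal.ofReal_ne_top h1.2
    rwa [ENNReal.toReal_ofReal hq.le] at this
  set M : ℝ≥0∞ := eLpNormEssSup G μ with hM
  have hMlt : M < ⊤ := by
    have := h2.2; rwa [eLpNorm_exponent_top] at this
  have hbd : ∀ᵐ a ∂μ, (‖G a‖₊ : ℝ≥0∞) ^ r ≤ M ^ (r - q) * (‖G a‖₊ : ℝ≥0∞) ^ q := by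
    filter_upwards [ae_le_eLpNormEssSup (f := G) (μ := μ)] with a ha
    calc (‖G a‖₊ : ℝ≥0∞) ^ r = (‖G a‖₊ : ℝ≥0∞) ^ (r - q) * (‖G a‖₊ : ℝ≥0∞) ^ q := by
          rw [← ENNReal.rpow_add_of_nonneg _ _ (by linarith) hq.le, sub_add_cancel]
      _ ≤ M ^ (r - q) * (‖G a‖₊ : ℝ≥0∞) ^ q := by
          exact mul_le_mul_left (ENNReal.rpow_le_rpow ha (by linarith)) _
  calc (∫⁻ a, (‖G a‖₊ : ℝ≥0∞) ^ r ∂μ) ≤ ∫⁻ a, M ^ (r - q) * (‖G a‖₊ : ℝ≥0∞) ^ q ∂μ :=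
        lintegral_mono_ae hbd
    _ = M ^ (r - q) * ∫⁻ a, (‖G a‖₊ : ℝ≥0∞) ^ q ∂μ := lintegral_const_mul' _ _
        (ENNReal.rpow_lt_top_of_nonneg (by linarith) hMlt.ne).ne
    _ < ⊤ := ENNReal.mul_lt_top (ENNReal.rpow_lt_top_of_nonneg (by linarith) hMlt.ne) hint

/-- The measurable equivalence `(y, z) ↦ (y - z, z)` of `E3 × E3`. -/
def subEquiv : (E3 × E3) ≃ᵐ (E3 × E3) :=
{ toEquiv := ⟨fun p => (p.1 - p.2, p.2), fun p => (p.1 + p.2, p.2),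
    fun p => by simp, fun p => by simp⟩,
  measurable_toFun := (measurable_fst.sub measurable_snd).prodMk measurable_snd,
  measurable_invFun := (measurable_fst.add measurable_snd).prodMk measurable_snd }

lemma lintegral_neg_E3 (f : E3 → ℝ≥0∞) : ∫⁻ x, f (-x) = ∫⁻ x, f x :=
  (Measure.measurePreserving_neg (volume : Measure E3)).lintegral_comp_emb
    (MeasurableEquiv.neg E3).measurableEmbedding f

/-- Under (H2)–(H3), the functions `(y,z) ↦ g₂(0,y)`, `(y,z) ↦ g₂(0,z)`,
`(y,z) ↦ g₂(y,z)` and `(y,z) ↦ g₃(0,y,z)/g₂(0,y)` belong to the class `𝒢`. -/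
theorem correlation_functions_mem_classG
    (g₂ : E3 → E3 → ℝ) (g₃ : E3 → E3 → E3 → ℝ)
    (hg₂meas : Measurable fun p : E3 × E3 => g₂ p.1 p.2)
    (hg₃meas : Measurable fun p : E3 × E3 × E3 => g₃ p.1 p.2.1 p.2.2)
    (hg₂nonneg : ∀ a b, 0 ≤ g₂ a b) (hg₃nonneg : ∀ a b c, 0 ≤ g₃ a b c)
    (hg₂bdd : ∃ C : ℝ, ∀ a b, g₂ a b ≤ C) (hg₃bdd : ∃ C : ℝ, ∀ a b c, g₃ a b c ≤ C)
    (hg₂perm : ∀ a b, g₂ a b = g₂ b a)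
    (hg₃perm₁ : ∀ a b c, g₃ a b c = g₃ b a c)
    (hg₃perm₂ : ∀ a b c, g₃ a b c = g₃ a c b)
    (hg₂trans : ∀ a b t : E3, g₂ (a + t) (b + t) = g₂ a b)
    (hg₃trans : ∀ a b c t : E3, g₃ (a + t) (b + t) (c + t) = g₃ a b c)
    (q : ℝ) (hq : 1 < q) (F : E3 → ℝ) (hF : MemLqLinf q F)
    (hF0 : Tendsto F (cocompact E3) (nhds 0))
    (hH2 : ∀ y : E3, |g₂ 0 y - 1| ≤ F y)
    (hH3 : ∃ R₂ : E3 → E3 → ℝ,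
        (∀ y z : E3, g₃ 0 y z = g₂ 0 y * (g₂ 0 z + R₂ y z)) ∧
        ∀ y z : E3, |R₂ y z| ≤ F (y - z))
    (hv₂₃ : ∀ a b c : E3, g₂ a b = 0 → g₃ a b c = 0)
    :
    ClassG (fun y _z => g₂ 0 y) ∧
    ClassG (fun _y z => g₂ 0 z) ∧
    ClassG (fun y z => g₂ y z) ∧
    ClassG (fun y z => g₃ 0 y z / g₂ 0 y) := by
  obtain ⟨R₂, hR₂eq, hR₂bd⟩ := hH3
  have hq0 : (0:ℝ) < q := by linarith
  have hFnn : ∀ x, 0 ≤ F x := fun x => (abs_nonneg _).trans (hH2 x)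
  have hF2q : MemLp F (ENNReal.ofReal (2*q)) volume :=
    memLp_interp hq0 (by linarith) hF.1 hF.2
  -- measurability of `y ↦ g₂ 0 y`
  have hA : Measurable fun y : E3 => g₂ 0 y :=
    hg₂meas.comp (measurable_const.prodMk measurable_id)
  -- domination by F gives membership in L^{2q} ∩ L^∞
  have domMem : ∀ h : E3 → ℝ, Measurable h → (∀ y, |h y| ≤ F y) → MemLqLinf (2*q) h := by
    intro h hm hb
    have hb' : ∀ᵐ y ∂(volume : Measure E3), ‖h y‖ ≤ ‖F y‖ := by
      refine ae_of_all _ fun y => ?_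
      rw [Real.norm_eq_abs, Real.norm_eq_abs]
      exact (hb y).trans (le_abs_self _)
    exact ⟨hF2q.of_le hm.aestronglyMeasurable hb', hF.2.of_le hm.aestronglyMeasurable hb'⟩
  have hCu : ConstPlusLqLinf (2*q) (fun y => g₂ 0 y) :=
    ⟨1, fun y => g₂ 0 y - 1, domMem _ (hA.sub measurable_const) (fun y => hH2 y),
      by funext y; ring⟩
  have hCone : ConstPlusLqLinf (2*q) (fun _ : E3 => (1:ℝ)) :=
    ⟨1, fun _ => 0, ⟨MemLp.zero', MemLp.zero'⟩, by funext x; simp⟩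
  have hRzero : MemLp (fun _ : E3 × E3 => (0:ℝ)) (ENNReal.ofReal (2*q))
      (volume : Measure (E3 × E3)) ∧ MemLp (fun _ : E3 × E3 => (0:ℝ)) ⊤
      (volume : Measure (E3 × E3)) := ⟨MemLp.zero', MemLp.zero'⟩
  have h2q1 : (1:ℝ) ≤ 2*q := by linarith
  -- symmetry facts
  have heven : ∀ w : E3, g₂ 0 (-w) = g₂ 0 w := by
    intro w
    have h := hg₂trans 0 w (-w)
    rw [zero_add, add_neg_cancel] at h
    rw [← h, hg₂perm]
  have hdiff : ∀ y z : E3, g₂ y z = g₂ 0 (y - z) := by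
    intro y z
    have h := hg₂trans 0 (z - y) y
    rw [zero_add, sub_add_cancel] at h
    rw [h, ← neg_sub y z, heven]
  have hg₃shift : ∀ y z : E3, g₃ 0 y z = g₃ 0 (-y) (z - y) := by
    intro y z
    have h := hg₃trans y 0 z (-y)
    rw [add_neg_cancel, zero_add, ← sub_eq_add_neg] at h
    rw [h]
    exact hg₃perm₁ 0 y z
  refine ⟨?_, ?_, ?_, ?_⟩
  · exact ⟨1, 2*q, h2q1, (fun _ y => g₂ 0 y), (fun _ _ => 1), (fun _ _ => 1),
      fun _ => ⟨hCu, hCone, hCone⟩, (fun _ => 0), hRzero.1, hRzero.2,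
      fun y z => by simp⟩
  · exact ⟨1, 2*q, h2q1, (fun _ _ => 1), (fun _ z => g₂ 0 z), (fun _ _ => 1),
      fun _ => ⟨hCone, hCu, hCone⟩, (fun _ => 0), hRzero.1, hRzero.2,
      fun y z => by simp⟩
  · exact ⟨1, 2*q, h2q1, (fun _ _ => 1), (fun _ _ => 1), (fun _ w => g₂ 0 w),
      fun _ => ⟨hCone, hCone, hCu⟩, (fun _ => 0), hRzero.1, hRzero.2,
      fun y z => by simpa using hdiff y z⟩
  -- the fourth function
  set χ : E3 → ℝ := fun y => if g₂ 0 y = 0 then 0 else 1 with hχdef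
  have hχmeas : Measurable χ :=
    Measurable.ite (hA (measurableSet_singleton 0)) measurable_const measurable_const
  have hCχ : ConstPlusLqLinf (2*q) χ := by
    refine ⟨1, fun y => χ y - 1, domMem _ (hχmeas.sub measurable_const) ?_, by funext y; ring⟩
    intro y
    by_cases h : g₂ 0 y = 0
    · have := hH2 y
      rw [h] at this
      simpa [hχdef, h] using this
    · simpa [hχdef, h] using hFnn y
  -- the exact value of the quotient off the zero set
  have hQ : ∀ y z : E3, g₂ 0 y ≠ 0 → g₃ 0 y z / g₂ 0 y = g₂ 0 z + R₂ y z := by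
    intro y z h
    rw [hR₂eq, mul_div_cancel_left₀ _ h]
  have hQ' : ∀ y z : E3, g₂ 0 y ≠ 0 →
      g₃ 0 y z / g₂ 0 y = g₂ 0 (y - z) + R₂ (-y) (z - y) := by
    intro y z h
    have key : g₃ 0 y z = g₂ 0 y * (g₂ 0 (y - z) + R₂ (-y) (z - y)) := by
      rw [hg₃shift y z, hR₂eq (-y) (z - y), heven y,
        show g₂ 0 (z - y) = g₂ 0 (y - z) by rw [← heven (y - z), neg_sub]]
    rw [key, mul_div_cancel_left₀ _ h]
  set Rr : E3 × E3 → ℝ := fun p =>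
    g₃ 0 p.1 p.2 / g₂ 0 p.1
      - χ p.1 * (1 + (g₂ 0 p.2 - 1) + (g₂ 0 (p.1 - p.2) - 1)) with hRrdef
  have hRr0 : ∀ y z : E3, g₂ 0 y = 0 → Rr (y, z) = 0 := by
    intro y z h
    simp [hRrdef, hχdef, h]
  have hbd1 : ∀ y z : E3, |Rr (y, z)| ≤ 2 * (F (y - z) + F (-(y - z))) := by
    intro y z
    by_cases h : g₂ 0 y = 0
    · rw [hRr0 y z h, abs_zero]
      have := hFnn (y - z); have := hFnn (-(y - z)); linarith
    · have hval : Rr (y, z) = R₂ y z - (g₂ 0 (y - z) - 1) := by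
        simp only [hRrdef]
        rw [hQ y z h]
        simp only [hχdef, if_neg h]
        ring
      rw [hval]
      have h1 := hR₂bd y z
      have h2 := hH2 (y - z)
      have h3 := hFnn (-(y - z))
      calc |R₂ y z - (g₂ 0 (y - z) - 1)| ≤ |R₂ y z| + |g₂ 0 (y - z) - 1| := abs_sub _ _
        _ ≤ 2 * (F (y - z) + F (-(y - z))) := by linarith
  have hbd2 : ∀ y z : E3, |Rr (y, z)| ≤ F z + F (-z) := by
    intro y z
    by_cases h : g₂ 0 y = 0
    · rw [hRr0 y z h, abs_zero]
      have := hFnn z; have := hFnn (-z); linarith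
    · have hval : Rr (y, z) = R₂ (-y) (z - y) - (g₂ 0 z - 1) := by
        simp only [hRrdef]
        rw [hQ' y z h]
        simp only [hχdef, if_neg h]
        ring
      rw [hval]
      have h1 := hR₂bd (-y) (z - y)
      have harg : -y - (z - y) = (-z : E3) := by abel
      rw [harg] at h1
      have h2 := hH2 z
      calc |R₂ (-y) (z - y) - (g₂ 0 z - 1)| ≤ |R₂ (-y) (z - y)| + |g₂ 0 z - 1| := abs_sub _ _
        _ ≤ F z + F (-z) := by linarith
  have hRrmeas : Measurable Rr := by
    have h1 : Measurable fun p : E3 × E3 => g₃ 0 p.1 p.2 :=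
      hg₃meas.comp (measurable_const.prodMk measurable_id)
    exact (h1.div (hA.comp measurable_fst)).sub
      ((hχmeas.comp measurable_fst).mul
        ((measurable_const.add ((hA.comp measurable_snd).sub measurable_const)).add
          ((hA.comp (measurable_fst.sub measurable_snd)).sub measurable_const)))
  -- L^∞ bound
  have hMtop : eLpNormEssSup F volume ≠ ⊤ := by
    have := hF.2.2; rw [eLpNorm_exponent_top] at this; exact this.ne
  have hFM : ∀ᵐ x ∂(volume : Measure E3), F x ≤ (eLpNormEssSup F volume).toReal := by
    filter_upwards [ae_le_eLpNormEssSup (f := F) (μ := volume)] with x hx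
    have h2 : ‖F x‖ ≤ (eLpNormEssSup F volume).toReal := by
      have := ENNReal.toReal_mono hMtop hx
      simpa using this
    rw [Real.norm_eq_abs] at h2
    exact (le_abs_self _).trans h2
  have qmpsnd : Measure.QuasiMeasurePreserving (Prod.snd : E3 × E3 → E3)
      (volume : Measure (E3 × E3)) volume := by
    rw [Measure.volume_eq_prod]; exact Measure.quasiMeasurePreserving_snd
  have qmpnegsnd : Measure.QuasiMeasurePreserving (fun p : E3 × E3 => -p.2)
      (volume : Measure (E3 × E3)) volume :=
    (Measure.measurePreserving_neg (volume : Measure E3)).quasiMeasurePreserving.comp qmpsnd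
  have hRtop : MemLp Rr ⊤ (volume : Measure (E3 × E3)) := by
    refine memLp_top_of_bound hRrmeas.aestronglyMeasurable
      (2 * (eLpNormEssSup F volume).toReal) ?_
    filter_upwards [qmpsnd.ae hFM, qmpnegsnd.ae hFM] with p h1 h2
    have hb := hbd2 p.1 p.2
    rw [Prod.mk.eta] at hb
    rw [Real.norm_eq_abs]
    linarith
  -- L^{2q} bound
  have h2q0 : ENNReal.ofReal (2*q) ≠ 0 := by
    rw [Ne, ENNReal.ofReal_eq_zero]; push_neg; linarith
  have hR2q : MemLp Rr (ENNReal.ofReal (2*q)) (volume : Measure (E3 × E3)) := by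
    refine ⟨hRrmeas.aestronglyMeasurable, ?_⟩
    rw [eLpNorm_lt_top_iff_lintegral_rpow_enorm_lt_top h2q0 ENNReal.ofReal_ne_top,
      ENNReal.toReal_ofReal (by linarith)]
    set Φ : E3 → ℝ≥0∞ := fun x => ENNReal.ofReal (2 * (F x + F (-x))) ^ q with hΦdef
    have hstep1 : ∀ p : E3 × E3, (‖Rr p‖₊ : ℝ≥0∞) ^ (2*q) ≤ Φ (p.1 - p.2) * Φ p.2 := by
      rintro ⟨y, z⟩
      have hy1 : (0:ℝ) ≤ 2 * (F (y - z) + F (-(y - z))) := by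
        have := hFnn (y - z); have := hFnn (-(y - z)); linarith
      have hy2 : (0:ℝ) ≤ 2 * (F z + F (-z)) := by
        have := hFnn z; have := hFnn (-z); linarith
      have hreal : |Rr (y, z)| ^ (2:ℕ) ≤
          (2 * (F (y - z) + F (-(y - z)))) * (2 * (F z + F (-z))) := by
        have h1 := hbd1 y z
        have h2 := hbd2 y z
        have h2' : |Rr (y, z)| ≤ 2 * (F z + F (-z)) := by
          have := hFnn z; have := hFnn (-z); linarith
        calc |Rr (y, z)| ^ (2:ℕ) = |Rr (y, z)| * |Rr (y, z)| := by ring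
          _ ≤ _ := mul_le_mul h1 h2' (abs_nonneg _) hy1
      calc (‖Rr (y, z)‖₊ : ℝ≥0∞) ^ (2*q) = ((‖Rr (y, z)‖₊ : ℝ≥0∞) ^ (2:ℝ)) ^ q := by
            rw [← ENNReal.rpow_mul]
        _ ≤ (ENNReal.ofReal ((2 * (F (y - z) + F (-(y - z)))) * (2 * (F z + F (-z))))) ^ q := by
            refine ENNReal.rpow_le_rpow ?_ hq0.le
            rw [← enorm_eq_nnnorm, ← ofReal_norm,
              ENNReal.ofReal_rpow_of_nonneg (norm_nonneg _) (by norm_num : (0:ℝ) ≤ 2)]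
            refine ENNReal.ofReal_le_ofReal ?_
            rw [Real.norm_eq_abs, Real.rpow_two]
            exact hreal
        _ = Φ (y - z) * Φ z := by
            rw [ENNReal.ofReal_mul hy1, ENNReal.mul_rpow_of_nonneg _ _ hq0.le]
    have hFaem : AEMeasurable F (volume : Measure E3) := hF.1.1.aemeasurable
    have hFnegaem : AEMeasurable (fun x : E3 => F (-x)) (volume : Measure E3) :=
      hFaem.comp_quasiMeasurePreserving
        (Measure.measurePreserving_neg (volume : Measure E3)).quasiMeasurePreserving
    have haemΦ : AEMeasurable Φ (volume : Measure E3) := by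
      exact (((hFaem.add hFnegaem).const_mul 2).ennreal_ofReal).pow aemeasurable_const
    have hΦint : (∫⁻ x, Φ x) < ⊤ := by
      have hcoe : ∀ x : E3, ‖F x‖ₑ = ENNReal.ofReal (F x) := fun x => by
        rw [← ofReal_norm, Real.norm_eq_abs, abs_of_nonneg (hFnn x)]
      have hFq : (∫⁻ x, ENNReal.ofReal (F x) ^ q) < ⊤ := by
        have h := lintegral_rpow_enorm_lt_top_of_eLpNorm_lt_top
          (by rw [Ne, ENNReal.ofReal_eq_zero]; push_neg; linarith)
          ENNReal.ofReal_ne_top hF.1.2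
        rw [ENNReal.toReal_ofReal hq0.le] at h
        simpa only [hcoe] using h
      have hFqneg : (∫⁻ x, ENNReal.ofReal (F (-x)) ^ q) < ⊤ := by
        rw [lintegral_neg_E3 (fun x => ENNReal.ofReal (F x) ^ q)]; exact hFq
      have hpt : ∀ x : E3, Φ x ≤ ((2:ℝ≥0∞) ^ q * (2:ℝ≥0∞) ^ q) *
          (ENNReal.ofReal (F x) ^ q + ENNReal.ofReal (F (-x)) ^ q) := by
        intro x
        have hax := hFnn x; have hbx := hFnn (-x)
        have heq : ENNReal.ofReal (2 * (F x + F (-x))) =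
            2 * (ENNReal.ofReal (F x) + ENNReal.ofReal (F (-x))) := by
          rw [ENNReal.ofReal_mul (by norm_num), ENNReal.ofReal_add hax hbx]
          norm_num
        set A := ENNReal.ofReal (F x)
        set B := ENNReal.ofReal (F (-x))
        have hAB : A + B ≤ 2 * max A B := by
          rw [two_mul]; exact add_le_add (le_max_left _ _) (le_max_right _ _)
        calc Φ x = (2 * (A + B)) ^ q := by rw [hΦdef]; simp only []; rw [heq]
          _ ≤ (2 * (2 * max A B)) ^ q := by
              exact ENNReal.rpow_le_rpow (by exact mul_le_mul_right hAB 2) hq0.le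
          _ = ((2:ℝ≥0∞) ^ q * (2:ℝ≥0∞) ^ q) * (max A B) ^ q := by
              rw [show (2:ℝ≥0∞) * (2 * max A B) = 2 * 2 * max A B by ring,
                ENNReal.mul_rpow_of_nonneg _ _ hq0.le,
                ENNReal.mul_rpow_of_nonneg _ _ hq0.le]
          _ ≤ ((2:ℝ≥0∞) ^ q * (2:ℝ≥0∞) ^ q) * (A ^ q + B ^ q) := by
              refine mul_le_mul_right ?_ _
              rcases le_total A B with hc | hc
              · rw [max_eq_right hc]; exact le_add_self
              · rw [max_eq_left hc]; exact le_self_add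
      have hcne : ((2:ℝ≥0∞) ^ q * (2:ℝ≥0∞) ^ q) ≠ ⊤ := by
        have h2 : ((2:ℝ≥0∞) ^ q) < ⊤ :=
          ENNReal.rpow_lt_top_of_nonneg hq0.le (by norm_num)
        exact (ENNReal.mul_lt_top h2 h2).ne
      calc (∫⁻ x, Φ x) ≤ ∫⁻ x, ((2:ℝ≥0∞) ^ q * (2:ℝ≥0∞) ^ q) *
            (ENNReal.ofReal (F x) ^ q + ENNReal.ofReal (F (-x)) ^ q) := lintegral_mono hpt
        _ = ((2:ℝ≥0∞) ^ q * (2:ℝ≥0∞) ^ q) *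
            ∫⁻ x, (ENNReal.ofReal (F x) ^ q + ENNReal.ofReal (F (-x)) ^ q) :=
            lintegral_const_mul' _ _ hcne
        _ = ((2:ℝ≥0∞) ^ q * (2:ℝ≥0∞) ^ q) *
            ((∫⁻ x, ENNReal.ofReal (F x) ^ q) + ∫⁻ x, ENNReal.ofReal (F (-x)) ^ q) := by
            rw [lintegral_add_left' (hFaem.ennreal_ofReal.pow aemeasurable_const) _]
        _ < ⊤ := ENNReal.mul_lt_top (by exact hcne.lt_top)
            (ENNReal.add_lt_top.mpr ⟨hFq, hFqneg⟩)
    have hmp : MeasurePreserving (⇑subEquiv)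
        ((volume : Measure E3).prod volume) ((volume : Measure E3).prod volume) :=
      measurePreserving_sub_prod volume volume
    calc (∫⁻ p : E3 × E3, (‖Rr p‖₊ : ℝ≥0∞) ^ (2*q))
        ≤ ∫⁻ p : E3 × E3, Φ (p.1 - p.2) * Φ p.2 := lintegral_mono hstep1
      _ = ∫⁻ p : E3 × E3, Φ p.1 * Φ p.2 ∂((volume : Measure E3).prod volume) := by
          rw [Measure.volume_eq_prod]
          exact hmp.lintegral_comp_emb subEquiv.measurableEmbedding (fun p => Φ p.1 * Φ p.2)
      _ = (∫⁻ x, Φ x) * (∫⁻ x, Φ x) := lintegral_prod_mul haemΦ haemΦ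
      _ < ⊤ := ENNReal.mul_lt_top hΦint hΦint
  refine ⟨3, 2*q, h2q1, ![χ, χ, χ], ![fun _ => 1, fun z => g₂ 0 z - 1, fun _ => 1],
    ![fun _ => 1, fun _ => 1, fun w => g₂ 0 w - 1], ?_, Rr, hR2q, hRtop, ?_⟩
  · have hCu' : ConstPlusLqLinf (2*q) (fun y : E3 => g₂ 0 y - 1) :=
      ⟨0, fun y => g₂ 0 y - 1, domMem _ (hA.sub measurable_const) (fun y => hH2 y),
        by funext y; ring⟩
    intro k
    fin_cases k
    · exact ⟨hCχ, hCone, hCone⟩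
    · exact ⟨hCχ, hCu', hCone⟩
    · exact ⟨hCχ, hCone, hCu'⟩
  · intro y z
    simp only [Fin.sum_univ_three, Matrix.cons_val_zero, Matrix.cons_val_one, Matrix.head_cons,
      Matrix.cons_val_two, Matrix.tail_cons, hRrdef]
    ring
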